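/- Let H be an N_B×N_A complex matrix, B an N_A×N_s complex matrix, and Γ an N_B×N_B Hermitian positive definite complex matrix. Set M := H·B·Bᴴ·Hᴴ + Γ and C* := M⁻¹·H·B, and for an N_B×N_s complex matrix C define E(C) := (I_{N_s} − Cᴴ·H·B)·(I_{N_s} − Cᴴ·H·B)ᴴ + Cᴴ·Γ·C. Then for every N_s×N_s Hermitian positive definite matrix W and every N_B×N_s complex matrix C, one has ln det(W) − Re(Tr(W·E(C))) + N_s ≤ ln det(I_{N_B} + H·B·Bᴴ·Hᴴ·Γ⁻¹), and equality holds when C = C* and W = E(C*)⁻¹. (Rate–WMMSE equivalence: the achievable rate equals the maximum of the weighted-MMSE objective.) -/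

import Mathlib

open Matrix ComplexOrder

section aux
variable {n : ℕ}

lemma my_trace_eq_sum_eigenvalues {A : Matrix (Fin n) (Fin n) ℂ} (hA : A.IsHermitian) :
    A.trace = ∑ i, (hA.eigenvalues i : ℂ) := by
  conv_lhs => rw [hA.spectral_theorem]
  rw [Unitary.conjStarAlgAut_apply, Matrix.trace_mul_cycle,
    Matrix.mem_unitaryGroup_iff'.mp (hA.eigenvectorUnitary).2, Matrix.one_mul,
    Matrix.trace_diagonal]
  rfl

lemma my_det_re_of_posDef {A : Matrix (Fin n) (Fin n) ℂ} (hA : A.PosDef) :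
    A.det = (A.det.re : ℂ) ∧ 0 < A.det.re := by
  have h := hA.det_pos
  rw [Complex.lt_def] at h
  obtain ⟨h1, h2⟩ := h
  simp only [Complex.zero_re, Complex.zero_im] at h1 h2
  exact ⟨Complex.ext rfl h2.symm, h1⟩

lemma my_log_det_le {X : Matrix (Fin n) (Fin n) ℂ} (hX : X.PosDef) :
    Real.log X.det.re ≤ X.trace.re - n := by
  have hdet : X.det.re = ∏ i, hX.isHermitian.eigenvalues i := by
    rw [hX.isHermitian.det_eq_prod_eigenvalues, ← RCLike.ofReal_prod]
    exact Complex.ofReal_re _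
  have htr : X.trace.re = ∑ i, hX.isHermitian.eigenvalues i := by
    rw [my_trace_eq_sum_eigenvalues hX.isHermitian, ← Complex.ofReal_sum]
    exact Complex.ofReal_re _
  rw [hdet, htr]
  have hpos := hX.eigenvalues_pos
  rw [Real.log_prod (fun i _ => (hpos i).ne')]
  calc ∑ i, Real.log (hX.isHermitian.eigenvalues i)
      ≤ ∑ i, (hX.isHermitian.eigenvalues i - 1) :=
        Finset.sum_le_sum fun i _ => Real.log_le_sub_one_of_pos (hpos i)
    _ = (∑ i, hX.isHermitian.eigenvalues i) - n := by
        rw [Finset.sum_sub_distrib]; simp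

lemma my_trace_re_nonneg {P : Matrix (Fin n) (Fin n) ℂ} (hP : P.PosSemidef) :
    0 ≤ P.trace.re := by
  rw [Matrix.trace, Complex.re_sum]
  refine Finset.sum_nonneg fun i _ => ?_
  have := hP.re_dotProduct_nonneg (Pi.single i 1)
  simpa [dotProduct, Matrix.mulVec, Pi.single_apply, Finset.sum_ite_eq,
    Matrix.diag] using this

open scoped MatrixOrder in
lemma my_trace_mul_re_nonneg {W Δ : Matrix (Fin n) (Fin n) ℂ} (hW : W.PosSemidef)
    (hΔ : Δ.PosSemidef) : 0 ≤ ((W * Δ).trace).re := by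
  obtain ⟨N, rfl⟩ := CStarAlgebra.nonneg_iff_eq_star_mul_self.mp hΔ.nonneg
  rw [← Matrix.mul_assoc, Matrix.trace_mul_cycle]
  exact my_trace_re_nonneg (hW.mul_mul_conjTranspose_same N)

lemma my_posDef_conj {A S : Matrix (Fin n) (Fin n) ℂ} (hA : A.PosDef)
    (hS : IsUnit S.det) : (Sᴴ * A * S).PosDef := by
  refine Matrix.PosDef.of_dotProduct_mulVec_pos (isHermitian_conjTranspose_mul_mul _ hA.1) fun x hx => ?_
  have hSx : S *ᵥ x ≠ 0 := by
    intro h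
    apply hx
    have h2 := congrArg (fun v => S⁻¹ *ᵥ v) h
    simpa [Matrix.mulVec_mulVec, Matrix.nonsing_inv_mul _ hS] using h2
  simpa only [star_mulVec, dotProduct_mulVec, vecMul_vecMul] using hA.dotProduct_mulVec_pos hSx

open scoped MatrixOrder in
set_option maxHeartbeats 1000000 in
lemma my_log_det_pair {W A : Matrix (Fin n) (Fin n) ℂ} (hW : W.PosDef) (hA : A.PosDef) :
    Real.log W.det.re + Real.log A.det.re ≤ ((W * A).trace).re - n := by
  set S := CFC.sqrt A with hSdef
  have hSH : Sᴴ = S := (CFC.sqrt_nonneg A).posSemidef.1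
  have hSS : S * S = A := CFC.sqrt_mul_sqrt_self A hA.posSemidef.nonneg
  have hdetSS : S.det * S.det = A.det := by rw [← Matrix.det_mul, hSS]
  have hSdet : IsUnit S.det := by
    refine isUnit_iff_ne_zero.mpr fun h => hA.det_pos.ne' ?_
    rw [← hdetSS, h, mul_zero]
  have hX : (S * W * S).PosDef := by
    have h := my_posDef_conj hW hSdet
    rwa [hSH] at h
  have hkey := my_log_det_le hX
  obtain ⟨hWr, hWp⟩ := my_det_re_of_posDef hW
  obtain ⟨hAr, hAp⟩ := my_det_re_of_posDef hA
  have hdet : (S * W * S).det = ((W.det.re * A.det.re : ℝ) : ℂ) := by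
    rw [Matrix.det_mul, Matrix.det_mul,
      show S.det * W.det * S.det = W.det * (S.det * S.det) by ring, hdetSS,
      Complex.ofReal_mul, ← hWr, ← hAr]
  have htr : (S * W * S).trace = (W * A).trace := by
    rw [Matrix.trace_mul_cycle, hSS, Matrix.trace_mul_comm]
  rw [hdet, htr, Complex.ofReal_re,
    Real.log_mul hWp.ne' hAp.ne'] at hkey
  exact hkey

end aux

/-- Rate–WMMSE equivalence: for every Hermitian positive definite
weight `W` and every equalizer `C`, `ln det W − Re Tr(W·E(C)) + N_s ≤
ln det(I + H·B·Bᴴ·Hᴴ·Γ⁻¹)`, with equality at `C = C* = M⁻¹·H·B`,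
`W = E(C*)⁻¹`. -/
theorem rate_wmmse_equivalence (nB nA ns : ℕ)
    (H : Matrix (Fin nB) (Fin nA) ℂ) (B : Matrix (Fin nA) (Fin ns) ℂ)
    (Γ : Matrix (Fin nB) (Fin nB) ℂ) (hΓ : Γ.PosDef)
    (M : Matrix (Fin nB) (Fin nB) ℂ)
    (hM : M = H * B * Bᴴ * Hᴴ + Γ)
    (Cstar : Matrix (Fin nB) (Fin ns) ℂ)
    (hCstar : Cstar = M⁻¹ * H * B)
    (E : Matrix (Fin nB) (Fin ns) ℂ → Matrix (Fin ns) (Fin ns) ℂ)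
    (hE : ∀ C, E C = (1 - Cᴴ * H * B) * (1 - Cᴴ * H * B)ᴴ + Cᴴ * Γ * C) :
    (∀ (W : Matrix (Fin ns) (Fin ns) ℂ), W.PosDef →
      ∀ C : Matrix (Fin nB) (Fin ns) ℂ,
        Real.log (W.det).re - ((W * E C).trace).re + (ns : ℝ) ≤
          Real.log (((1 : Matrix (Fin nB) (Fin nB) ℂ) + H * B * Bᴴ * Hᴴ * Γ⁻¹).det).re) ∧
    (Real.log (((E Cstar)⁻¹).det).re - (((E Cstar)⁻¹ * E Cstar).trace).re + (ns : ℝ) =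
      Real.log (((1 : Matrix (Fin nB) (Fin nB) ℂ) + H * B * Bᴴ * Hᴴ * Γ⁻¹).det).re) := by
  -- basic positivity facts
  have hMpd : M.PosDef := by
    rw [hM]
    have h1 : (H * B * Bᴴ * Hᴴ).PosSemidef := by
      have := Matrix.posSemidef_self_mul_conjTranspose (H * B)
      simpa [Matrix.conjTranspose_mul, Matrix.mul_assoc] using this
    exact Matrix.PosDef.posSemidef_add h1 hΓ
  have hMdet : IsUnit M.det := isUnit_iff_ne_zero.mpr hMpd.det_pos.ne'
  have hΓdet : IsUnit Γ.det := isUnit_iff_ne_zero.mpr hΓ.det_pos.ne'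
  have hMcancel : ∀ (X : Matrix (Fin nB) (Fin ns) ℂ), M⁻¹ * (M * X) = X := fun X => by
    rw [← Matrix.mul_assoc, Matrix.nonsing_inv_mul _ hMdet, Matrix.one_mul]
  have hMcancel' : ∀ (X : Matrix (Fin nB) (Fin ns) ℂ), M * (M⁻¹ * X) = X := fun X => by
    rw [← Matrix.mul_assoc, Matrix.mul_nonsing_inv _ hMdet, Matrix.one_mul]
  -- expansion of E
  have hEexp : ∀ C, E C = 1 - Bᴴ * (Hᴴ * C) - Cᴴ * (H * B) + Cᴴ * (M * C) := by
    intro C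
    have hΓeq : Γ = M - H * B * Bᴴ * Hᴴ := by rw [hM]; abel
    rw [hE C, hΓeq]
    simp only [Matrix.conjTranspose_sub, Matrix.conjTranspose_one, Matrix.conjTranspose_mul,
      Matrix.conjTranspose_conjTranspose, Matrix.mul_sub, Matrix.sub_mul, Matrix.one_mul,
      Matrix.mul_one, Matrix.mul_assoc]
    abel
  -- E at Cstar
  have hE0 : E Cstar = 1 - Bᴴ * (Hᴴ * (M⁻¹ * (H * B))) := by
    rw [hEexp Cstar, hCstar]
    simp only [Matrix.conjTranspose_mul, Matrix.conjTranspose_nonsing_inv,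
      hMpd.isHermitian.eq, Matrix.mul_assoc, hMcancel]
    abel
  -- the difference identity
  have hdelta : ∀ C, E C = E Cstar + (C - Cstar)ᴴ * M * (C - Cstar) := by
    intro C
    rw [hEexp C, hE0, hCstar]
    simp only [Matrix.conjTranspose_sub, Matrix.conjTranspose_mul,
      Matrix.conjTranspose_nonsing_inv, hMpd.isHermitian.eq, Matrix.mul_sub,
      Matrix.sub_mul, Matrix.mul_assoc, hMcancel, hMcancel']
    abel
  -- Woodbury-type identity
  set X : Matrix (Fin ns) (Fin ns) ℂ := 1 + Bᴴ * (Hᴴ * (Γ⁻¹ * (H * B))) with hXdef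
  have hkey2 : H * B * Bᴴ * Hᴴ * Γ⁻¹ * (H * B) = M * (Γ⁻¹ * (H * B)) - H * B := by
    have h1 : H * B * Bᴴ * Hᴴ = M - Γ := by rw [hM]; abel
    rw [h1, Matrix.sub_mul, Matrix.sub_mul, Matrix.mul_nonsing_inv _ hΓdet, Matrix.one_mul,
      Matrix.mul_assoc]
  have hkey2' : H * (B * (Bᴴ * (Hᴴ * (Γ⁻¹ * (H * B))))) = M * (Γ⁻¹ * (H * B)) - H * B := by
    rw [← hkey2]; simp only [Matrix.mul_assoc]
  have hwood : E Cstar * X = 1 := by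
    rw [hE0, hXdef]
    simp only [Matrix.mul_add, Matrix.add_mul, Matrix.mul_sub, Matrix.sub_mul,
      Matrix.one_mul, Matrix.mul_one, Matrix.mul_assoc, hkey2', hMcancel]
    abel
  have hXpd : X.PosDef := by
    have hpsd : (Bᴴ * (Hᴴ * (Γ⁻¹ * (H * B)))).PosSemidef := by
      have := (hΓ.inv.posSemidef).conjTranspose_mul_mul_same (H * B)
      simpa [Matrix.conjTranspose_mul, Matrix.mul_assoc] using this
    rw [hXdef]
    exact Matrix.PosDef.add_posSemidef Matrix.PosDef.one hpsd
  have hXdet : IsUnit X.det := isUnit_iff_ne_zero.mpr hXpd.det_pos.ne'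
  have hE0pd : (E Cstar).PosDef := by
    have : X⁻¹ = E Cstar := Matrix.inv_eq_left_inv hwood
    rw [← this]
    exact hXpd.inv
  have hE0det : IsUnit (E Cstar).det := isUnit_iff_ne_zero.mpr hE0pd.det_pos.ne'
  have hE0inv : (E Cstar)⁻¹ = X := Matrix.inv_eq_right_inv hwood
  -- determinant relation with the RHS matrix
  have hRX : ((1 : Matrix (Fin nB) (Fin nB) ℂ) + H * B * Bᴴ * Hᴴ * Γ⁻¹).det = X.det := by
    have h := Matrix.det_one_add_mul_comm (H * B) (Bᴴ * Hᴴ * Γ⁻¹)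
    rw [hXdef]
    convert h using 3 <;> simp only [Matrix.mul_assoc]
  -- real determinant values
  obtain ⟨hE0r, hE0p⟩ := my_det_re_of_posDef hE0pd
  obtain ⟨hXr, hXp⟩ := my_det_re_of_posDef hXpd
  have hab : (E Cstar).det.re * X.det.re = 1 := by
    have h := congrArg Matrix.det hwood
    rw [Matrix.det_mul, Matrix.det_one, hE0r, hXr, ← Complex.ofReal_mul] at h
    exact_mod_cast h
  have hlogX : Real.log X.det.re = - Real.log (E Cstar).det.re := by
    have : Real.log ((E Cstar).det.re * X.det.re) = 0 := by rw [hab, Real.log_one]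
    rw [Real.log_mul hE0p.ne' hXp.ne'] at this
    linarith
  constructor
  · intro W hW C
    have hΔpsd : ((C - Cstar)ᴴ * M * (C - Cstar)).PosSemidef :=
      hMpd.posSemidef.conjTranspose_mul_mul_same (C - Cstar)
    have hsplit : ((W * E C).trace).re
        = ((W * E Cstar).trace).re + ((W * ((C - Cstar)ᴴ * M * (C - Cstar))).trace).re := by
      rw [hdelta C, Matrix.mul_add, Matrix.trace_add, Complex.add_re]
    have hnn : 0 ≤ ((W * ((C - Cstar)ᴴ * M * (C - Cstar))).trace).re :=
      my_trace_mul_re_nonneg hW.posSemidef hΔpsd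
    have hpair := my_log_det_pair hW hE0pd
    rw [hRX, hlogX]
    linarith
  · have htr1 : ((E Cstar)⁻¹ * E Cstar) = 1 := Matrix.nonsing_inv_mul _ hE0det
    rw [hRX, htr1, Matrix.trace_one, hE0inv, hlogX]
    simp
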